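/- On a spin chain of L unit cells with q spin-1/2's each (PBC), define O^r_α = ∏_{1≤k<α}(Z^{r+1}_k Z^r_k)^{P_{kα}} · X^r_α · ∏_{α<l≤q}(Z^r_l Z^{r-1}_l)^{P_{αl}} for binary parameters P_{ij} (i<j). Then [O^r_α, O^{r'}_{α'}] = 0 for all r, r', α, α'. -/

import Mathlib

open Matrix

/-- Pauli `Z` on site `s` of the periodic chain. -/
noncomputable def Zop (L q : ℕ) [NeZero L] (s : ZMod L × Fin q) :
    Matrix ((ZMod L × Fin q) → Fin 2) ((ZMod L × Fin q) → Fin 2) ℂ :=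
  Matrix.diagonal (fun x => (-1 : ℂ) ^ ((x s : ℕ)))

/-- Pauli `X` on site `s` of the periodic chain. -/
noncomputable def Xop (L q : ℕ) [NeZero L] (s : ZMod L × Fin q) :
    Matrix ((ZMod L × Fin q) → Fin 2) ((ZMod L × Fin q) → Fin 2) ℂ :=
  fun x y => if x = Function.update y s (1 - y s) then 1 else 0

/-- The cocycle stabilizer
`O^r_α = ∏_{k<α}(Z^{r+1}_k Z^r_k)^{P_{kα}} · X^r_α · ∏_{α<l}(Z^r_l Z^{r−1}_l)^{P_{αl}}`,
written as the (diagonal) product of its `Z` factors times its `X` factor. -/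
noncomputable def Ocal (L q : ℕ) [NeZero L] (P : Fin q → Fin q → ℕ)
    (r : ZMod L) (α : Fin q) :
    Matrix ((ZMod L × Fin q) → Fin 2) ((ZMod L × Fin q) → Fin 2) ℂ :=
  Matrix.diagonal (fun x =>
      (∏ k ∈ Finset.univ.filter (fun k : Fin q => k < α),
        (-1 : ℂ) ^ (P k α * ((x (r + 1, k) : ℕ) + (x (r, k) : ℕ))))
      * ∏ l ∈ Finset.univ.filter (fun l : Fin q => α < l),
        (-1 : ℂ) ^ (P α l * ((x (r, l) : ℕ) + (x (r - 1, l) : ℕ))))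
    * Xop L q (r, α)

section Aux

variable (L q : ℕ) [NeZero L]

/-- Spin flipS at site `s`. -/
def flipS (s : ZMod L × Fin q) (x : (ZMod L × Fin q) → Fin 2) :
    (ZMod L × Fin q) → Fin 2 :=
  Function.update x s (1 - x s)

lemma flipS_flipS (s : ZMod L × Fin q) (x : (ZMod L × Fin q) → Fin 2) :
    flipS L q s (flipS L q s x) = x := by
  have h2 : ∀ a : Fin 2, 1 - (1 - a) = a := by decide
  funext v
  by_cases h : v = s
  · subst h
    simp [flipS, Function.update_self, h2]
  · simp [flipS, Function.update_of_ne h]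

lemma flipS_comm (s t : ZMod L × Fin q) (x : (ZMod L × Fin q) → Fin 2) :
    flipS L q s (flipS L q t x) = flipS L q t (flipS L q s x) := by
  by_cases h : s = t
  · subst h; rfl
  · unfold flipS
    rw [Function.update_of_ne (Ne.symm h), Function.update_of_ne h,
      Function.update_comm (Ne.symm h)]

lemma Xop_apply (s : ZMod L × Fin q) (x y : (ZMod L × Fin q) → Fin 2) :
    Xop L q s x y = if y = flipS L q s x then 1 else 0 := by
  have : (x = flipS L q s y) ↔ (y = flipS L q s x) := by
    constructor <;> intro h <;> rw [h, flipS_flipS]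
  show (if x = flipS L q s y then (1:ℂ) else 0) = _
  exact if_congr this rfl rfl

lemma DX_mul_DX_apply (f g : ((ZMod L × Fin q) → Fin 2) → ℂ)
    (s t : ZMod L × Fin q) (x y : (ZMod L × Fin q) → Fin 2) :
    ((Matrix.diagonal f * Xop L q s) * (Matrix.diagonal g * Xop L q t)) x y
      = f x * g (flipS L q s x) * (if x = flipS L q s (flipS L q t y) then 1 else 0) := by
  rw [Matrix.mul_apply]
  have hterm : ∀ z, (Matrix.diagonal f * Xop L q s) x z *
      (Matrix.diagonal g * Xop L q t) z y
      = if z = flipS L q s x then f x * g z * (if z = flipS L q t y then 1 else 0) else 0 := by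
    intro z
    rw [Matrix.diagonal_mul, Matrix.diagonal_mul]
    show f x * (if x = flipS L q s z then (1:ℂ) else 0)
        * (g z * (if z = flipS L q t y then (1:ℂ) else 0)) = _
    by_cases h : z = flipS L q s x
    · subst h
      simp only [flipS_flipS, eq_self_iff_true, if_true]
      ring
    · have h' : ¬ x = flipS L q s z := fun hc => h (by rw [hc, flipS_flipS])
      rw [if_neg h', if_neg h]
      ring
  rw [Finset.sum_congr rfl (fun z _ => hterm z), Finset.sum_ite_eq']
  simp only [Finset.mem_univ, if_true]
  have hiff : (flipS L q s x = flipS L q t y) ↔ (x = flipS L q s (flipS L q t y)) := by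
    constructor <;> intro h
    · rw [← h, flipS_flipS]
    · rw [h, flipS_flipS]
  congr 1
  exact if_congr hiff rfl rfl

/-- The diagonal function of `Ocal`. -/
noncomputable def Fd (P : Fin q → Fin q → ℕ) (r : ZMod L) (α : Fin q)
    (x : (ZMod L × Fin q) → Fin 2) : ℂ :=
  (∏ k ∈ Finset.univ.filter (fun k : Fin q => k < α),
      (-1 : ℂ) ^ (P k α * ((x (r + 1, k) : ℕ) + (x (r, k) : ℕ))))
    * ∏ l ∈ Finset.univ.filter (fun l : Fin q => α < l),
      (-1 : ℂ) ^ (P α l * ((x (r, l) : ℕ) + (x (r - 1, l) : ℕ)))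

lemma Ocal_eq (P : Fin q → Fin q → ℕ) (r : ZMod L) (α : Fin q) :
    Ocal L q P r α = Matrix.diagonal (Fd L q P r α) * Xop L q (r, α) := rfl

/-- Sign picked up by `Fd L q P r α` under a flipS at site `(r', α')`. -/
noncomputable def sgn (P : Fin q → Fin q → ℕ) (r : ZMod L) (α : Fin q)
    (r' : ZMod L) (α' : Fin q) : ℂ :=
  ((if α' < α ∧ r + 1 = r' then (-1 : ℂ) ^ (P α' α) else 1)
      * (if α' < α ∧ r = r' then (-1 : ℂ) ^ (P α' α) else 1))
    * ((if α < α' ∧ r = r' then (-1 : ℂ) ^ (P α α') else 1)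
      * (if α < α' ∧ r - 1 = r' then (-1 : ℂ) ^ (P α α') else 1))

lemma flipS_pow (P' : ℕ) (u v : ZMod L × Fin q) (x : (ZMod L × Fin q) → Fin 2) :
    (-1 : ℂ) ^ (P' * ((flipS L q u x v : ℕ)))
      = (if v = u then (-1 : ℂ) ^ P' else 1) * (-1 : ℂ) ^ (P' * ((x v : ℕ))) := by
  by_cases h : v = u
  · subst h
    simp only [flipS, Function.update_self, if_pos rfl]
    have h2 : x v = 0 ∨ x v = 1 := by
      have : ∀ a : Fin 2, a = 0 ∨ a = 1 := by decide
      exact this (x v)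
    rcases h2 with h' | h' <;> rw [h'] <;> norm_num
    rw [← pow_add, ← two_mul, pow_mul]
    norm_num
  · simp [flipS, Function.update_of_ne h, h]

lemma prod_if_site (s : Finset (Fin q)) (a r' : ZMod L) (α' : Fin q)
    (e : Fin q → ℂ) :
    (∏ k ∈ s, (if ((a, k) : ZMod L × Fin q) = (r', α') then e k else 1))
      = if α' ∈ s ∧ a = r' then e α' else 1 := by
  have hterm : ∀ k, (if ((a, k) : ZMod L × Fin q) = (r', α') then e k else 1)
      = if k = α' then (if a = r' then e k else 1) else 1 := by
    intro k
    by_cases h1 : k = α' <;> by_cases h2 : a = r' <;> simp [h1, h2, Prod.ext_iff]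
  rw [Finset.prod_congr rfl (fun k _ => hterm k), Finset.prod_ite_eq']
  by_cases h : α' ∈ s <;> by_cases h2 : a = r' <;> simp [h, h2]

lemma Fd_flipS (P : Fin q → Fin q → ℕ) (r : ZMod L) (α : Fin q)
    (r' : ZMod L) (α' : Fin q) (x : (ZMod L × Fin q) → Fin 2) :
    Fd L q P r α (flipS L q (r', α') x) = sgn L q P r α r' α' * Fd L q P r α x := by
  unfold Fd sgn
  have hk : ∀ k ∈ Finset.univ.filter (fun k : Fin q => k < α),
      (-1 : ℂ) ^ (P k α * ((flipS L q (r', α') x (r + 1, k) : ℕ)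
        + (flipS L q (r', α') x (r, k) : ℕ)))
      = ((if ((r + 1, k) : ZMod L × Fin q) = (r', α') then (-1 : ℂ) ^ (P k α) else 1)
          * (if ((r, k) : ZMod L × Fin q) = (r', α') then (-1 : ℂ) ^ (P k α) else 1))
        * (-1 : ℂ) ^ (P k α * ((x (r + 1, k) : ℕ) + (x (r, k) : ℕ))) := by
    intro k _
    rw [Nat.mul_add, pow_add, flipS_pow, flipS_pow, Nat.mul_add, pow_add]
    ring
  have hl : ∀ l ∈ Finset.univ.filter (fun l : Fin q => α < l),
      (-1 : ℂ) ^ (P α l * ((flipS L q (r', α') x (r, l) : ℕ)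
        + (flipS L q (r', α') x (r - 1, l) : ℕ)))
      = ((if ((r, l) : ZMod L × Fin q) = (r', α') then (-1 : ℂ) ^ (P α l) else 1)
          * (if ((r - 1, l) : ZMod L × Fin q) = (r', α') then (-1 : ℂ) ^ (P α l) else 1))
        * (-1 : ℂ) ^ (P α l * ((x (r, l) : ℕ) + (x (r - 1, l) : ℕ))) := by
    intro l _
    rw [Nat.mul_add, pow_add, flipS_pow, flipS_pow, Nat.mul_add, pow_add]
    ring
  rw [Finset.prod_congr rfl hk, Finset.prod_congr rfl hl,
    Finset.prod_mul_distrib, Finset.prod_mul_distrib,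
    Finset.prod_mul_distrib, Finset.prod_mul_distrib,
    prod_if_site, prod_if_site, prod_if_site, prod_if_site]
  simp only [Finset.mem_filter, Finset.mem_univ, true_and]
  ring

lemma zmod_key (c : Prop) [Decidable c] (a b : ZMod L) (e : ℂ) :
    (if c ∧ a + 1 = b then e else 1) * (if c ∧ a = b then e else 1)
      = (if c ∧ b = a then e else 1) * (if c ∧ b - 1 = a then e else 1) := by
  have h1 : (a + 1 = b) ↔ (b - 1 = a) := by
    constructor <;> intro h
    · rw [← h]; ring
    · rw [← h]; ring
  have h2 : (a = b) ↔ (b = a) := eq_comm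
  simp only [h1, h2]
  rw [mul_comm]

lemma sgn_symm (P : Fin q → Fin q → ℕ) (r : ZMod L) (α : Fin q)
    (r' : ZMod L) (α' : Fin q) :
    sgn L q P r α r' α' = sgn L q P r' α' r α := by
  unfold sgn
  rw [zmod_key L (α' < α) r r' ((-1 : ℂ) ^ (P α' α)),
    ← zmod_key L (α < α') r' r ((-1 : ℂ) ^ (P α α')), mul_comm]

end Aux

/-- The cocycle stabilizers of the `(ℤ₂)^q` SPT Hamiltonian pairwise commute. -/
theorem cocycle_stabilizers_commute (L q : ℕ) [NeZero L]
    (P : Fin q → Fin q → ℕ) (hP : ∀ i j, P i j ≤ 1) :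
    ∀ (r r' : ZMod L) (α α' : Fin q),
      Ocal L q P r α * Ocal L q P r' α' = Ocal L q P r' α' * Ocal L q P r α := by
  intro r r' α α'
  rw [Ocal_eq, Ocal_eq]
  ext x y
  rw [DX_mul_DX_apply, DX_mul_DX_apply, flipS_comm]
  have hscal : Fd L q P r α x * Fd L q P r' α' (flipS L q (r, α) x)
      = Fd L q P r' α' x * Fd L q P r α (flipS L q (r', α') x) := by
    rw [Fd_flipS, Fd_flipS, sgn_symm]
    ring
  by_cases hi : x = flipS L q (r', α') (flipS L q (r, α) y)
  · rw [if_pos hi, mul_one, mul_one]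
    linear_combination hscal
  · simp [hi]
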